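/- Apolarity Lemma (one direction): if F ∈ ℂ[x₀,…,xₙ]_d can be written F = L₁^d + … + L_s^d with the L_i pairwise non-proportional linear forms, then the homogeneous ideal I of the set of s points [L₁],…,[L_s] ∈ ℙⁿ (under the identification of linear forms with points) satisfies I ⊆ F^⊥. -/

import Mathlib

open MvPolynomial

/-- The differential operator on `ℂ[x₀,…,xₙ]` associated to a polynomial
`p ∈ ℂ[y₀,…,yₙ]`: each variable `yᵢ` acts as `∂/∂xᵢ`. -/
noncomputable def diffOp {m : ℕ} (p : MvPolynomial (Fin m) ℂ) :
    Module.End ℂ (MvPolynomial (Fin m) ℂ) :=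
  (AddMonoidAlgebra.coeff p).sum fun a c =>
    c • (List.ofFn fun i : Fin m =>
      ((pderiv i : Derivation ℂ (MvPolynomial (Fin m) ℂ) (MvPolynomial (Fin m) ℂ)).toLinearMap :
        Module.End ℂ (MvPolynomial (Fin m) ℂ)) ^ a i).prod

/-- The homogeneous ideal of the point `[a₀ : … : aₙ] ∈ ℙⁿ`, generated by the
linear forms `aⱼ yₖ - aₖ yⱼ`. -/
noncomputable def pointIdeal {m : ℕ} (a : Fin m → ℂ) :
    Ideal (MvPolynomial (Fin m) ℂ) :=
  Ideal.span {q | ∃ j k : Fin m, q = C (a j) * X k - C (a k) * X j}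

noncomputable def Dend {m : ℕ} (i : Fin m) : Module.End ℂ (MvPolynomial (Fin m) ℂ) :=
  (pderiv i : Derivation ℂ (MvPolynomial (Fin m) ℂ) (MvPolynomial (Fin m) ℂ)).toLinearMap

lemma my_pderiv_comm {m : ℕ} (i j : Fin m) (p : MvPolynomial (Fin m) ℂ) :
    pderiv i (pderiv j p) = pderiv j (pderiv i p) := by
  induction p using MvPolynomial.induction_on with
  | C c => simp
  | add p q hp hq => simp [hp, hq]
  | mul_X p k hp =>
    simp only [pderiv_mul, map_add, hp]
    by_cases hik : i = k <;> by_cases hjk : j = k <;>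
      simp [hik, hjk, pderiv_X_self, pderiv_X_of_ne, Ne.symm]

lemma Dend_comm {m : ℕ} (i j : Fin m) : Dend i * Dend j = Dend j * Dend i := by
  exact LinearMap.ext fun p => my_pderiv_comm i j p

noncomputable instance adjComm (m : ℕ) :
    CommRing (Algebra.adjoin ℂ (Set.range (Dend (m := m)))) :=
  Algebra.adjoinCommRingOfComm ℂ (by
    rintro x ⟨i, rfl⟩ y ⟨j, rfl⟩
    exact Dend_comm i j)

noncomputable def DendA {m : ℕ} (i : Fin m) : Algebra.adjoin ℂ (Set.range (Dend (m := m))) :=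
  ⟨Dend i, Algebra.subset_adjoin ⟨i, rfl⟩⟩

noncomputable def Phi {m : ℕ} :
    MvPolynomial (Fin m) ℂ →ₐ[ℂ] Module.End ℂ (MvPolynomial (Fin m) ℂ) :=
  (Algebra.adjoin ℂ (Set.range (Dend (m := m)))).val.comp (aeval DendA)

lemma diffOp_eq_Phi {m : ℕ} (p : MvPolynomial (Fin m) ℂ) : diffOp p = Phi p := by
  induction p using MvPolynomial.induction_on' with
  | monomial u c =>
    rw [diffOp, MvPolynomial.sum_monomial_eq (by simp)]
    have : Phi (monomial u c) = c • ((Algebra.adjoin ℂ (Set.range (Dend (m := m)))).val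
        (∏ i, DendA i ^ u i)) := by
      simp [Phi, aeval_monomial, algebraMap_smul, Algebra.smul_def]
    rw [this]
    congr 1
    rw [← List.prod_ofFn, map_list_prod, List.map_ofFn]
    rfl
  | add p q hp hq =>
    have hadd : diffOp (p + q) = diffOp p + diffOp q := by
      unfold diffOp
      exact Finsupp.sum_add_index (by simp) (by intros; rw [add_smul])
    rw [hadd, hp, hq, map_add]

lemma diffOp_C_mul_X {m : ℕ} (c : ℂ) (k : Fin m) :
    diffOp (C c * X k) = c • Dend k := by
  rw [diffOp_eq_Phi]
  simp only [Phi, AlgHom.comp_apply, map_mul, aeval_C, aeval_X, Algebra.smul_def]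
  simp [DendA, Algebra.smul_def]

lemma pderiv_linform {m : ℕ} (b : Fin m → ℂ) (k : Fin m) :
    pderiv k (∑ l, C (b l) * X l) = C (b k) := by
  rw [map_sum]
  rw [Finset.sum_eq_single k (fun l _ hl => by simp [pderiv_C_mul, pderiv_X_of_ne hl])
    (by simp)]
  simp [pderiv_C_mul]

lemma diffOp_gen_kill {m : ℕ} (b : Fin m → ℂ) (j k : Fin m) (d : ℕ) :
    diffOp (C (b j) * X k - C (b k) * X j) ((∑ l, C (b l) * X l) ^ d) = 0 := by
  have hsub : diffOp (C (b j) * X k - C (b k) * X j)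
      = diffOp (C (b j) * X k) - diffOp (C (b k) * X j) := by
    rw [diffOp_eq_Phi, diffOp_eq_Phi, diffOp_eq_Phi, map_sub]
  rw [hsub, LinearMap.sub_apply, diffOp_C_mul_X, diffOp_C_mul_X,
    LinearMap.smul_apply, LinearMap.smul_apply]
  have hpow : ∀ i : Fin m, Dend i ((∑ l, C (b l) * X l) ^ d)
      = d • (∑ l, C (b l) * X l) ^ (d - 1) * C (b i) := by
    intro i
    have := Derivation.leibniz_pow
      (pderiv i : Derivation ℂ (MvPolynomial (Fin m) ℂ) (MvPolynomial (Fin m) ℂ))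
      (∑ l, C (b l) * X l) (n := d)
    rw [Dend]
    simp only [Derivation.coeFn_coe] at this ⊢
    rw [this, pderiv_linform, smul_eq_mul, smul_mul_assoc]
  rw [hpow, hpow, smul_eq_C_mul, smul_eq_C_mul]
  ring

theorem apolarity_lemma_forward (n s d : ℕ)
    (a : Fin s → Fin (n + 1) → ℂ) (ha : ∀ i, a i ≠ 0)
    (hprop : ∀ i j : Fin s, i ≠ j → ∀ c : ℂ, a i ≠ c • a j)
    (F : MvPolynomial (Fin (n + 1)) ℂ)
    (hF : F = ∑ i, (∑ j, C (a i j) * X j) ^ d) :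
    ∀ p ∈ ⨅ i : Fin s, pointIdeal (a i), diffOp p F = 0 := by
  intro p hp
  subst hF
  rw [map_sum]
  refine Finset.sum_eq_zero fun i _ => ?_
  have hpi : p ∈ pointIdeal (a i) := Ideal.mem_iInf.1 hp i
  refine Submodule.span_induction ?_ ?_ ?_ ?_ hpi
  · rintro q ⟨j, k, rfl⟩
    exact diffOp_gen_kill (a i) j k d
  · simp [diffOp]
  · intro x y _ _ hx hy
    have : diffOp (x + y) = diffOp x + diffOp y := by
      rw [diffOp_eq_Phi, diffOp_eq_Phi, diffOp_eq_Phi, map_add]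
    rw [this, LinearMap.add_apply, hx, hy, add_zero]
  · intro r q _ hq
    have : diffOp (r • q) = diffOp r * diffOp q := by
      rw [smul_eq_mul, diffOp_eq_Phi, diffOp_eq_Phi, diffOp_eq_Phi, map_mul]
    rw [this, Module.End.mul_apply, hq, map_zero]
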